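/- arXiv:0802.4359 — 5 statements merged into one kernel-verified Lean document; each statement's English description precedes it below -/
import Mathlib

section
/- The automorphism R_{(a b⁻¹ a)⁴} of the free group F_2 on generators a, b is the inner automorphism of conjugation by the commutator b a b⁻¹ a⁻¹; that is, for every u ∈ F_2, R_{(a b⁻¹ a)⁴}(u) = (b a b⁻¹ a⁻¹) u (b a b⁻¹ a⁻¹)⁻¹. -/
namespace PalWord

/-- The free group on two generators `a`, `b`. -/
abbrev F : Type := FreeGroup Bool

/-- The first generator `a` of the free group `F`. -/
def a : F := FreeGroup.of false

/-- The second generator `b` of the free group `F`. -/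
def b : F := FreeGroup.of true

/-- The automorphism `R_a` of `F`, with `a ↦ a`, `b ↦ b a`. -/
def Ra : MulAut F :=
  MonoidHom.toMulEquiv
    (FreeGroup.lift (fun x => if x then b * a else a))
    (FreeGroup.lift (fun x => if x then b * a⁻¹ else a))
    (by ext x; cases x <;> simp [a, b])
    (by ext x; cases x <;> simp [a, b])

/-- The automorphism `R_b` of `F`, with `a ↦ a b`, `b ↦ b`. -/
def Rb : MulAut F :=
  MonoidHom.toMulEquiv
    (FreeGroup.lift (fun x => if x then b else a * b))
    (FreeGroup.lift (fun x => if x then b else a * b⁻¹))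
    (by ext x; cases x <;> simp [a, b])
    (by ext x; cases x <;> simp [a, b])

/-- The homomorphism `w ↦ R_w` from `F` to `Aut(F)`, sending `a` to `R_a` and `b` to `R_b`. -/
def R : F →* MulAut F := FreeGroup.lift (fun x => if x then Rb else Ra)

@[simp] lemma Ra_a : Ra a = a := by simp [Ra, a, b]
@[simp] lemma Ra_b : Ra b = b * a := by simp [Ra, a, b]
@[simp] lemma Rb_a : Rb a = a * b := by simp [Rb, a, b]
@[simp] lemma Rb_b : Rb b = b := by simp [Rb, a, b]
@[simp] lemma RaInv_a : Ra⁻¹ a = a := rfl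
@[simp] lemma RaInv_b : Ra⁻¹ b = b * a⁻¹ := rfl
@[simp] lemma RbInv_a : Rb⁻¹ a = a * b⁻¹ := rfl
@[simp] lemma RbInv_b : Rb⁻¹ b = b := rfl
@[simp] lemma RbSymm_a : Rb.symm a = a * b⁻¹ := rfl
@[simp] lemma RbSymm_b : Rb.symm b = b := rfl
@[simp] lemma R_a : R a = Ra := by simp [R, a]
@[simp] lemma R_b : R b = Rb := by simp [R, b]

/-- `R_{(a b⁻¹ a)⁴}` is conjugation by the commutator `b a b⁻¹ a⁻¹`. -/
theorem R_abinva_pow_four (u : F) :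
    R ((a * b⁻¹ * a) ^ 4) u =
      (b * a * b⁻¹ * a⁻¹) * u * (b * a * b⁻¹ * a⁻¹)⁻¹ := by
  have key : (R ((a * b⁻¹ * a) ^ 4)).toMonoidHom =
      (MulAut.conj (b * a * b⁻¹ * a⁻¹)).toMonoidHom := by
    ext x
    have hx : FreeGroup.of x = if x then b else a := by cases x <;> simp [a, b]
    rw [hx]
    cases x <;>
      simp [pow_succ, MulAut.mul_apply, map_mul, map_inv, mul_assoc]
  have := DFunLike.congr_fun key u
  simpa [MulAut.conj, mul_assoc] using this

end PalWord
end

section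
/- For every element w of the free group F_2 on two generators a, b, one has Pal(w) = (b a)⁻¹ R_w(b a), i.e., Pal(w) = a⁻¹ b⁻¹ R_w(b a). -/
namespace PalWord

/-- The palindromization map `Pal(w) = (a b)⁻¹ · R_w(a b)`. -/
def Pal (w : F) : F := (a * b)⁻¹ * R w (a * b)

lemma R_comm (w : F) : R w (b * a * b⁻¹ * a⁻¹) = b * a * b⁻¹ * a⁻¹ := by
  induction w using FreeGroup.induction_on with
  | C1 => simp
  | of x =>
    cases x <;>
      simp only [R, FreeGroup.lift_apply_of, if_true, if_false, Bool.false_eq_true, Ra, Rb,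
        MonoidHom.toMulEquiv, MulEquiv.coe_mk, Equiv.coe_fn_mk, map_mul, map_inv,
        FreeGroup.lift_apply_of, a, b] <;> group
  | inv_of x ih =>
    rw [map_inv]
    exact (MulEquiv.symm_apply_eq _).mpr ih.symm
  | mul x y ihx ihy =>
    rw [map_mul R x y, MulAut.mul_apply, ihy, ihx]

/-- For every `w`, `Pal(w) = (b a)⁻¹ · R_w(b a)`, i.e. `Pal(w) = a⁻¹ b⁻¹ R_w(b a)`. -/
theorem Pal_eq_ba (w : F) : Pal w = (b * a)⁻¹ * R w (b * a) := by
  have h2 : R w (b * a) = (b * a * b⁻¹ * a⁻¹) * R w (a * b) := by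
    rw [← R_comm w, ← map_mul]
    congr 1
    group
  rw [Pal, h2]
  group

end PalWord
end

section
/- For every element w of the free group F_2 on two generators a, b, one has L_w(b a) = Pal(w) · b a, where w ↦ L_w is the homomorphism F_2 → Aut(F_2) sending a to L_a and b to L_b. -/
namespace PalWord

/-- The automorphism `L_a` of `F`, with `a ↦ a`, `b ↦ a b`. -/
def La : MulAut F :=
  MonoidHom.toMulEquiv
    (FreeGroup.lift (fun x => if x then a * b else a))
    (FreeGroup.lift (fun x => if x then a⁻¹ * b else a))
    (by ext x; cases x <;> simp [a, b])
    (by ext x; cases x <;> simp [a, b])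

/-- The automorphism `L_b` of `F`, with `a ↦ b a`, `b ↦ b`. -/
def Lb : MulAut F :=
  MonoidHom.toMulEquiv
    (FreeGroup.lift (fun x => if x then b else b * a))
    (FreeGroup.lift (fun x => if x then b else b⁻¹ * a))
    (by ext x; cases x <;> simp [a, b])
    (by ext x; cases x <;> simp [a, b])

/-- The homomorphism `w ↦ L_w` sending `a` to `L_a` and `b` to `L_b`. -/
def L : F →* MulAut F := FreeGroup.lift (fun x => if x then Lb else La)


lemma pal_mul (w v : F) : Pal (w * v) = Pal w * R w (Pal v) := by
  unfold Pal
  rw [map_mul R w v, MulAut.mul_apply, map_mul (R w) ((a * b)⁻¹) (R v (a * b)),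
    map_inv (R w) (a * b), mul_assoc, mul_inv_cancel_left]

lemma pal_one : Pal 1 = 1 := by simp [Pal, mul_assoc]

lemma La_eq (x : F) : La x = a * Ra x * a⁻¹ := by
  have h : (La : F →* F) = ((MulAut.conj a * Ra : MulAut F) : F →* F) := by
    apply FreeGroup.ext_hom
    intro c
    cases c <;>
      simp [La, Ra, a, b, MonoidHom.toMulEquiv, MulAut.conj_apply, MulAut.mul_apply] <;> group
  have := DFunLike.congr_fun h x
  simpa [MulAut.mul_apply, MulAut.conj_apply] using this

lemma Lb_eq (x : F) : Lb x = b * Rb x * b⁻¹ := by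
  have h : (Lb : F →* F) = ((MulAut.conj b * Rb : MulAut F) : F →* F) := by
    apply FreeGroup.ext_hom
    intro c
    cases c <;>
      simp [Lb, Rb, a, b, MonoidHom.toMulEquiv, MulAut.conj_apply, MulAut.mul_apply] <;> group
  have := DFunLike.congr_fun h x
  simpa [MulAut.mul_apply, MulAut.conj_apply] using this

lemma pal_a : Pal a = a := by
  simp [Pal, R, a, b, Ra, MonoidHom.toMulEquiv]

lemma pal_b : Pal b = b := by
  simp [Pal, R, a, b, Rb, MonoidHom.toMulEquiv]
  group

lemma R_cancel (w x : F) : R w (R w⁻¹ x) = x := by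
  rw [← MulAut.mul_apply, ← map_mul, mul_inv_cancel, map_one, MulAut.one_apply]

lemma L_cancel (w x : F) : L w (L w⁻¹ x) = x := by
  rw [← MulAut.mul_apply, ← map_mul, mul_inv_cancel, map_one, MulAut.one_apply]

lemma pal_inv (w : F) : Pal w⁻¹ = R w⁻¹ (Pal w)⁻¹ := by
  have h := (pal_mul w w⁻¹).symm
  rw [mul_inv_cancel, pal_one] at h
  have h2 : R w (Pal w⁻¹) = (Pal w)⁻¹ := eq_inv_of_mul_eq_one_right h
  have h3 : R w (R w⁻¹ (Pal w)⁻¹) = (Pal w)⁻¹ := R_cancel w _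
  exact (R w).injective (h2.trans h3.symm)

lemma key (w : F) : ∀ x, L w x = Pal w * R w x * (Pal w)⁻¹ := by
  have inv_step : ∀ w : F, (∀ x, L w x = Pal w * R w x * (Pal w)⁻¹) →
      (∀ x, L w⁻¹ x = Pal w⁻¹ * R w⁻¹ x * (Pal w⁻¹)⁻¹) := by
    intro w hw x
    have h1 : L w (L w⁻¹ x) = x := L_cancel w x
    have h2 : R w (L w⁻¹ x) = (Pal w)⁻¹ * x * Pal w := by
      have h := hw (L w⁻¹ x)
      rw [h1] at h
      conv_rhs => rw [h]
      rw [mul_assoc (Pal w), inv_mul_cancel_left, inv_mul_cancel_right]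
    have h3 : L w⁻¹ x = R w⁻¹ ((Pal w)⁻¹ * x * Pal w) := by
      have h4 : R w (R w⁻¹ ((Pal w)⁻¹ * x * Pal w)) = (Pal w)⁻¹ * x * Pal w := R_cancel w _
      exact (R w).injective (h2.trans h4.symm)
    rw [h3, pal_inv, map_mul (R w⁻¹), map_mul (R w⁻¹), map_inv (R w⁻¹) (Pal w), inv_inv]
  induction w using FreeGroup.induction_on with
  | C1 =>
    intro x
    rw [map_one, map_one, pal_one]
    simp
  | of c =>
    cases c with
    | false =>
      intro x
      have hL : L (FreeGroup.of false) = La := FreeGroup.lift_apply_of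
      have hR : R (FreeGroup.of false) = Ra := FreeGroup.lift_apply_of
      rw [hL, hR]
      show La x = Pal a * Ra x * (Pal a)⁻¹
      rw [pal_a, La_eq]
    | true =>
      intro x
      have hL : L (FreeGroup.of true) = Lb := FreeGroup.lift_apply_of
      have hR : R (FreeGroup.of true) = Rb := FreeGroup.lift_apply_of
      rw [hL, hR]
      show Lb x = Pal b * Rb x * (Pal b)⁻¹
      rw [pal_b, Lb_eq]
  | inv_of c ih => exact inv_step _ ih
  | mul u v ihu ihv =>
    intro x
    rw [map_mul L u v, map_mul R u v, MulAut.mul_apply, MulAut.mul_apply, ihv, ihu, pal_mul,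
      map_mul, map_mul, map_inv]
    simp [mul_assoc, mul_inv_rev]

lemma fix_inv (w : F) (h : R w (b * a * (a * b)⁻¹) = b * a * (a * b)⁻¹) :
    R w⁻¹ (b * a * (a * b)⁻¹) = b * a * (a * b)⁻¹ := by
  have h1 : R w (R w⁻¹ (b * a * (a * b)⁻¹)) = b * a * (a * b)⁻¹ := R_cancel w _
  exact (R w).injective (h1.trans h.symm)

lemma R_fix (w : F) : R w (b * a * (a * b)⁻¹) = b * a * (a * b)⁻¹ := by
  induction w using FreeGroup.induction_on with
  | C1 => simp
  | of c =>
    cases c with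
    | false =>
      have hR : R (FreeGroup.of false) = Ra := FreeGroup.lift_apply_of
      rw [hR]
      simp [Ra, a, b, MonoidHom.toMulEquiv]
      group
    | true =>
      have hR : R (FreeGroup.of true) = Rb := FreeGroup.lift_apply_of
      rw [hR]
      simp [Rb, a, b, MonoidHom.toMulEquiv]
      group
  | inv_of c ih => exact fix_inv _ ih
  | mul u v ihu ihv =>
    rw [map_mul R u v, MulAut.mul_apply, ihv, ihu]

/-- For every `w`, `L_w(b a) = Pal(w) · b a`. -/
theorem Lw_ba (w : F) : L w (b * a) = Pal w * (b * a) := by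
  rw [key w (b * a)]
  have h : R w (b * a) = b * a * (a * b)⁻¹ * R w (a * b) := by
    have h0 := R_fix w
    rw [map_mul, map_mul, map_inv, map_mul] at h0
    rw [map_mul, map_mul]
    exact mul_inv_eq_iff_eq_mul.mp h0
  rw [h]
  simp [Pal, mul_inv_rev, mul_assoc, mul_inv_cancel_left, inv_mul_cancel_left]

end PalWord
end

section
/- For every element w of the free group F_2 on two generators a, b, one has π(Pal(w)) = (M_w − I₂)·(1,1)ᵀ in ℤ², where π : F_2 → ℤ² is the abelianization sending a to (1,0)ᵀ and b to (0,1)ᵀ, and w ↦ M_w is the homomorphism from F_2 to SL₂(ℤ) sending a to the matrix with rows (1,1),(0,1) and b to the matrix with rows (1,0),(1,1). -/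
namespace PalWord

/-- The abelianization map `π : F → ℤ²` sending `a ↦ (1,0)` and `b ↦ (0,1)`,
written multiplicatively. -/
def pi2 : F →* Multiplicative (Fin 2 → ℤ) :=
  FreeGroup.lift (fun x => Multiplicative.ofAdd (if x then ![0, 1] else ![1, 0]))

/-- The homomorphism `w ↦ M_w : F → SL₂(ℤ)` with `M_a = [[1,1],[0,1]]` and
`M_b = [[1,0],[1,1]]`. -/
def M : F →* Matrix.SpecialLinearGroup (Fin 2) ℤ :=
  FreeGroup.lift (fun x =>
    if x then ⟨!![1, 0; 1, 1], by norm_num [Matrix.det_fin_two_of]⟩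
    else ⟨!![1, 1; 0, 1], by norm_num [Matrix.det_fin_two_of]⟩)

lemma pure_eq_of (y : Bool) : (pure y : F) = FreeGroup.of y := rfl

lemma Ra_apply (v : F) : Ra v = FreeGroup.lift (fun x => if x then b * a else a) v := rfl
lemma Rb_apply (v : F) : Rb v = FreeGroup.lift (fun x => if x then b else a * b) v := rfl

lemma key_s13 (w : F) : ∀ v : F,
    Multiplicative.toAdd (pi2 (R w v)) =
      Matrix.mulVec (M w : Matrix (Fin 2) (Fin 2) ℤ) (Multiplicative.toAdd (pi2 v)) := by
  induction w using FreeGroup.induction_on with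
  | C1 => intro v; simp
  | of x =>
    intro v
    induction v using FreeGroup.induction_on with
    | C1 => simp
    | of y =>
      cases x <;> cases y <;>
        simp only [pure_eq_of, R, M, pi2, FreeGroup.lift_apply_of, if_true, if_false, Bool.false_eq_true,
          Ra_apply, Rb_apply, a, b, map_mul, toAdd_mul, toAdd_ofAdd] <;>
        ext i <;> fin_cases i <;>
        simp [Matrix.mulVec, dotProduct, Fin.sum_univ_two]
    | inv_of y ih =>
      simp only [map_inv, toAdd_inv, Matrix.mulVec_neg]
      rw [ih]
    | mul u v ihu ihv =>
      simp only [map_mul, toAdd_mul, Matrix.mulVec_add]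
      rw [ihu, ihv]
  | inv_of x ih =>
    intro v
    have h := ih ((R (FreeGroup.of x))⁻¹ v)
    rw [MulAut.inv_def, MulEquiv.apply_symm_apply] at h
    rw [map_inv, MulAut.inv_def, map_inv, h, Matrix.mulVec_mulVec,
      ← Matrix.SpecialLinearGroup.coe_mul, inv_mul_cancel,
      Matrix.SpecialLinearGroup.coe_one, Matrix.one_mulVec]
  | mul u v ihu ihv =>
    intro t
    rw [map_mul, MulAut.mul_apply, ihu, ihv, Matrix.mulVec_mulVec, map_mul,
      Matrix.SpecialLinearGroup.coe_mul]

/-- `π(Pal(w)) = (M_w − I₂)·(1,1)ᵀ` in `ℤ²`. -/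
theorem pi_Pal (w : F) :
    Multiplicative.toAdd (pi2 (Pal w)) =
      Matrix.mulVec ((M w : Matrix (Fin 2) (Fin 2) ℤ) - 1) ![1, 1] := by
  have hab : Multiplicative.toAdd (pi2 (a * b)) = ![1, 1] := by
    simp only [map_mul, toAdd_mul, pi2, a, b, FreeGroup.lift_apply_of, if_true, if_false,
      Bool.false_eq_true, toAdd_ofAdd]
    ext i; fin_cases i <;> simp
  rw [Pal, map_mul, toAdd_mul, map_inv, toAdd_inv, key_s13, hab, Matrix.sub_mulVec,
    Matrix.one_mulVec]
  abel


end PalWord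
end

section
/- The palindromization map Pal : F_2 → F_2 is continuous for the profinite topology on F_2; equivalently, for every u ∈ F_2 and every normal subgroup H of F_2 of finite index, there exists a normal subgroup K of F_2 of finite index such that for all v ∈ F_2 with u⁻¹ v ∈ K one has Pal(u)⁻¹ Pal(v) ∈ H. -/
namespace PalWord

/-- `Pal` is continuous for the profinite topology on `F₂`: for every `u` and
every finite-index normal subgroup `H`, there is a finite-index normal subgroup
`K` such that `u⁻¹ v ∈ K` implies `Pal(u)⁻¹ Pal(v) ∈ H`. -/
theorem Pal_profinite_continuous (u : F) (H : Subgroup F)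
    (hHn : H.Normal) (hHf : H.FiniteIndex) :
    ∃ K : Subgroup F, K.Normal ∧ K.FiniteIndex ∧
      ∀ v : F, u⁻¹ * v ∈ K → (Pal u)⁻¹ * Pal v ∈ H := by
  classical
  -- `N` is a finite-index characteristic subgroup contained in `H`
  set N : Subgroup F := ⨅ φ : F →* (F ⧸ H), φ.ker with hNdef
  haveI hfinQ : Finite (F ⧸ H) := H.finite_quotient_of_finiteIndex
  haveI hfinHom : Finite (F →* (F ⧸ H)) :=
    Finite.of_surjective (FreeGroup.lift : (Bool → F ⧸ H) → (F →* F ⧸ H))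
      (FreeGroup.lift (β := F ⧸ H)).surjective
  have hNH : N ≤ H := by
    have h1 := iInf_le (fun φ : F →* (F ⧸ H) => φ.ker) (QuotientGroup.mk' H)
    rwa [QuotientGroup.ker_mk'] at h1
  haveI hNn : N.Normal := by
    constructor
    intro n hn g
    rw [Subgroup.mem_iInf] at hn ⊢
    intro φ
    exact φ.normal_ker.conj_mem n (hn φ) g
  haveI hNf : N.FiniteIndex :=
    Subgroup.finiteIndex_iInf fun φ => Subgroup.finiteIndex_ker φ
  -- N is invariant under every R w
  have hchar : ∀ (w : F) (x : F), x ∈ N → R w x ∈ N := by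
    intro w x hx
    rw [Subgroup.mem_iInf] at hx ⊢
    intro φ
    have := hx (φ.comp (R w : F →* F))
    exact this
  have hRsplit : ∀ (w w' : F) (x : F), R (w * w') x = R w (R w' x) := by
    intro w w' x
    rw [map_mul, MulAut.mul_apply]
  have hRinv : ∀ (w : F) (x : F), R w⁻¹ (R w x) = x := by
    intro w x
    rw [← MulAut.mul_apply, ← map_mul, inv_mul_cancel, map_one, MulAut.one_apply]
  have hRinv' : ∀ (w : F) (x : F), R w (R w⁻¹ x) = x := by
    intro w x
    rw [← MulAut.mul_apply, ← map_mul, mul_inv_cancel, map_one, MulAut.one_apply]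
  -- the subgroup `K` of elements acting trivially modulo `N`
  let K : Subgroup F :=
    { carrier := {w : F | ∀ x : F, R w x * x⁻¹ ∈ N}
      one_mem' := by intro x; simp [N.one_mem]
      mul_mem' := by
        intro w w' hw hw' x
        have h1 : R w (R w' x) * (R w' x)⁻¹ ∈ N := hw (R w' x)
        have h2 : R w' x * x⁻¹ ∈ N := hw' x
        have := N.mul_mem h1 h2
        rw [hRsplit w w' x]
        simpa [mul_assoc] using this
      inv_mem' := by
        intro w hw x
        have h1 : R w (R w⁻¹ x) * (R w⁻¹ x)⁻¹ ∈ N := hw (R w⁻¹ x)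
        rw [hRinv' w x] at h1
        simpa using N.inv_mem h1 }
  have hKmem : ∀ w : F, w ∈ K ↔ ∀ x : F, R w x * x⁻¹ ∈ N := fun w => Iff.rfl
  refine ⟨K, ?_, ?_, ?_⟩
  · -- normality
    constructor
    intro n hn g x
    have h1 : R n (R g⁻¹ x) * (R g⁻¹ x)⁻¹ ∈ N := hn (R g⁻¹ x)
    have h2 := hchar g _ h1
    have h3 : R g (R n (R g⁻¹ x) * (R g⁻¹ x)⁻¹) = R (g * n * g⁻¹) x * x⁻¹ := by
      rw [map_mul (R g), map_inv (R g), hRinv' g x, hRsplit (g * n) g⁻¹, hRsplit g n]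
    rwa [h3] at h2
  · -- finite index
    have key : ∀ w w' : F, (∀ i : Bool,
        (QuotientGroup.mk (R w (FreeGroup.of i)) : F ⧸ N) =
          QuotientGroup.mk (R w' (FreeGroup.of i))) → w⁻¹ * w' ∈ K := by
      intro w w' h
      have heq : ((QuotientGroup.mk' N).comp (R w : F →* F)) =
          ((QuotientGroup.mk' N).comp (R w' : F →* F)) :=
        FreeGroup.ext_hom _ _ fun i => h i
      intro x
      have hx : (QuotientGroup.mk (R w x) : F ⧸ N) = QuotientGroup.mk (R w' x) := by
        have := congrArg (fun ψ : F →* F ⧸ N => ψ x) heq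
        simpa using this
      have hx2 : (R w x)⁻¹ * R w' x ∈ N := QuotientGroup.eq.mp hx
      have hww' : R w' x = R w (R (w⁻¹ * w') x) := by
        rw [← hRsplit, mul_inv_cancel_left]
      have h5 : R w (x⁻¹ * R (w⁻¹ * w') x) ∈ N := by
        rw [map_mul (R w), map_inv (R w), ← hww']; exact hx2
      have h6 : x⁻¹ * R (w⁻¹ * w') x ∈ N := by
        have := hchar w⁻¹ _ h5
        rwa [hRinv] at this
      have := hNn.conj_mem _ h6 x
      simpa [mul_assoc] using this
    have hsound : ∀ w w' : F, (QuotientGroup.leftRel K).r w w' →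
        (fun i : Bool => (QuotientGroup.mk (R w (FreeGroup.of i)) : F ⧸ N)) =
        (fun i : Bool => (QuotientGroup.mk (R w' (FreeGroup.of i)) : F ⧸ N)) := by
      intro w w' hww'
      have hk : w⁻¹ * w' ∈ K := (QuotientGroup.leftRel_apply).mp hww'
      funext i
      set x := FreeGroup.of i with hxdef
      have h1 : R (w⁻¹ * w') x * x⁻¹ ∈ N := hk x
      have h2 : x⁻¹ * R (w⁻¹ * w') x ∈ N := by
        have := hNn.conj_mem _ h1 x⁻¹
        simpa [mul_assoc] using this
      have h3 : R w (x⁻¹ * R (w⁻¹ * w') x) ∈ N := hchar w _ h2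
      have h4 : R w (x⁻¹ * R (w⁻¹ * w') x) = (R w x)⁻¹ * R w' x := by
        rw [map_mul (R w), map_inv (R w), ← hRsplit, mul_inv_cancel_left]
      rw [h4] at h3
      exact QuotientGroup.eq.mpr h3
    let f : F ⧸ K → (Bool → F ⧸ N) :=
      Quotient.lift (fun w => fun i : Bool =>
        (QuotientGroup.mk (R w (FreeGroup.of i)) : F ⧸ N)) hsound
    have hinj : Function.Injective f := by
      intro q q'
      induction q using Quotient.inductionOn with
      | h w =>
        induction q' using Quotient.inductionOn with
        | h w' =>
          intro hff
          exact Quotient.sound ((QuotientGroup.leftRel_apply).mpr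
            (key w w' fun i => congrFun hff i))
    haveI : Finite (F ⧸ N) := N.finite_quotient_of_finiteIndex
    haveI : Finite (F ⧸ K) := Finite.of_injective f hinj
    exact Subgroup.finiteIndex_of_finite_quotient
  · -- the continuity estimate
    intro v hv
    set k := u⁻¹ * v with hk
    have hvuk : v = u * k := by rw [hk, mul_inv_cancel_left]
    have hval : R k (a * b) * (a * b)⁻¹ ∈ N := hv (a * b)
    have h2 : (a * b)⁻¹ * R k (a * b) ∈ N := by
      have := hNn.conj_mem _ hval (a * b)⁻¹
      simpa [mul_assoc] using this
    have h3 : R u ((a * b)⁻¹ * R k (a * b)) ∈ N := hchar u _ h2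
    have h4 : R u ((a * b)⁻¹ * R k (a * b)) = (Pal u)⁻¹ * Pal v := by
      rw [map_mul (R u), map_inv (R u)]
      simp only [Pal]
      rw [hvuk, hRsplit u k]
      group
    rw [h4] at h3
    exact hNH h3

end PalWord
end
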